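/- arXiv:math/0501196 — 3 statements merged into one kernel-verified Lean document; each statement's English description precedes it below -/
import Mathlib

section
/- The natural map π : ℝP^{2n-1} → ℂP^{n-1}, induced by sending a nonzero vector in ℂ^n (up to real scalar) to its complex line, admits no continuous section when n ≥ 2. -/
open Projectivization

noncomputable instance (n : ℕ) :
    TopologicalSpace (Projectivization ℝ (Fin n → ℂ)) :=
  inferInstanceAs (TopologicalSpace (Quotient (projectivizationSetoid ℝ (Fin n → ℂ))))

noncomputable instance (n : ℕ) :
    TopologicalSpace (Projectivization ℂ (Fin n → ℂ)) :=
  inferInstanceAs (TopologicalSpace (Quotient (projectivizationSetoid ℂ (Fin n → ℂ))))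


namespace NoSection

open Complex Set Real Topology



lemma exp_const_endpoints {θ : ℝ → ℂ} (hθ : ContinuousOn θ (Icc 0 1))
    (h : ∀ s ∈ Icc (0:ℝ) 1, Complex.exp (θ s) = Complex.exp (θ 0)) :
    θ 1 = θ 0 := by
  by_contra hne
  obtain ⟨m, hm⟩ := (Complex.exp_eq_exp_iff_exists_int).mp (h 1 ⟨zero_le_one, le_refl 1⟩)
  have hm0 : m ≠ 0 := by
    rintro rfl; simp at hm; exact hne hm
  have him : ∀ s ∈ Icc (0:ℝ) 1, ∃ k : ℤ, (θ s - θ 0).im = k * (2 * π) := by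
    intro s hs
    obtain ⟨k, hk⟩ := (Complex.exp_eq_exp_iff_exists_int).mp (h s hs)
    refine ⟨k, ?_⟩
    have h2 : θ s - θ 0 = (k:ℂ) * (2*π*I) := by rw [hk]; ring
    rw [h2]
    simp [Complex.mul_im]
  set g : ℝ → ℝ := fun s => (θ s - θ 0).im with hg
  have hgc : ContinuousOn g (Icc 0 1) :=
    (Complex.continuous_im.comp_continuousOn (hθ.sub continuousOn_const))
  have hg0 : g 0 = 0 := by simp [hg]
  have hg1 : g 1 = m * (2 * π) := by
    show (θ 1 - θ 0).im = _
    have h2 : θ 1 - θ 0 = (m:ℂ) * (2*π*I) := by rw [hm]; ring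
    rw [h2]; simp [Complex.mul_im]
  have hπ : (0:ℝ) < π := Real.pi_pos
  have hne0 : (↑m * (2*π) : ℝ) ≠ 0 :=
    mul_ne_zero (Int.cast_ne_zero.mpr hm0) (by positivity)
  rcases hne0.lt_or_gt with hlt | hgt
  · -- m * 2π < 0
    have hm1 : (m:ℝ) ≤ -1 := by
      have : m < 0 := by
        by_contra hcon
        push_neg at hcon
        have : (0:ℝ) ≤ (m:ℝ) := by exact_mod_cast hcon
        nlinarith
      exact_mod_cast (by omega : m ≤ -1)
    have : -π ∈ g '' Icc 0 1 := by
      apply intermediate_value_Icc' zero_le_one hgc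
      constructor
      · rw [hg1]; nlinarith
      · rw [hg0]; linarith
    obtain ⟨s, hs, hsval⟩ := this
    obtain ⟨k, hk⟩ := him s hs
    have hπk : -π = (k:ℝ) * (2*π) := (show (θ s - θ 0).im = -π from hsval).symm.trans hk
    have h21 : (2:ℝ) * k = -1 := by nlinarith
    have : (2 * k : ℤ) = -1 := by exact_mod_cast h21
    omega
  · have hm1 : (1:ℝ) ≤ (m:ℝ) := by
      have : 0 < m := by
        by_contra hcon
        push_neg at hcon
        have : (m:ℝ) ≤ 0 := by exact_mod_cast hcon
        nlinarith
      exact_mod_cast (by omega : 1 ≤ m)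
    have : π ∈ g '' Icc 0 1 := by
      apply intermediate_value_Icc zero_le_one hgc
      constructor
      · rw [hg0]; linarith
      · rw [hg1]; nlinarith
    obtain ⟨s, hs, hsval⟩ := this
    obtain ⟨k, hk⟩ := him s hs
    have hπk : π = (k:ℝ) * (2*π) := (show (θ s - θ 0).im = π from hsval).symm.trans hk
    have h21 : (2:ℝ) * k = 1 := by nlinarith
    have : (2 * k : ℤ) = 1 := by exact_mod_cast h21
    omega

lemma no_winding (F : ℝ × ℝ → ℂ) (hF : Continuous F)
    (hnorm : ∀ p, ‖F p‖ = 1)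
    (hper : ∀ t : ℝ, F (1, t) = F (0, t))
    (htop : ∀ s : ℝ, F (s, 1) = F (0, 1))
    (hbot : ∀ s : ℝ, F (s, 0) = Complex.exp (-(4 * π * s) * I) * F (0, 0)) :
    False := by
  have hF0 : ∀ p, F p ≠ 0 := fun p hz => by simpa [hz] using hnorm p
  -- uniform continuity on the unit square
  set K : Set (ℝ × ℝ) := Icc 0 1 ×ˢ Icc 0 1 with hK
  have hKcomp : IsCompact K := (isCompact_Icc).prod isCompact_Icc
  have huc : UniformContinuousOn F K := hKcomp.uniformContinuousOn_of_continuous hF.continuousOn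
  obtain ⟨η, hη, hη1⟩ := (Metric.uniformContinuousOn_iff).mp huc 1 one_pos
  obtain ⟨N', hN'⟩ := exists_nat_one_div_lt hη
  set N : ℕ := N' + 1 with hN
  have hNpos : (0:ℝ) < N := by positivity
  have hstep : (1:ℝ)/N < η := by rw [hN]; push_cast; exact hN'
  -- inductive construction of logarithms level by level
  have main : ∀ j : ℕ, j ≤ N → ∃ θ : ℝ → ℂ, ContinuousOn θ (Icc 0 1) ∧
      (∀ s ∈ Icc (0:ℝ) 1, Complex.exp (θ s) = F (s, (j:ℝ)/N)) ∧
      θ 1 - θ 0 = -(4*π)*I := by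
    intro j hj
    induction j with
    | zero =>
      refine ⟨fun s => -(4*π*s)*I + Complex.log (F (0,0)), ?_, ?_, ?_⟩
      · fun_prop
      · intro s _
        rw [Complex.exp_add, Complex.exp_log (hF0 _)]
        simp only [Nat.cast_zero, zero_div]
        rw [hbot s]
      · push_cast; ring
    | succ j ih =>
      obtain ⟨θ, hθc, hθe, hθd⟩ := ih (by omega)
      set z : ℝ → ℂ := fun s => F (s, ((j:ℝ)+1)/N) / F (s, (j:ℝ)/N) with hz
      have hz0 : ∀ s, z s ≠ 0 := fun s => div_ne_zero (hF0 _) (hF0 _)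
      have hzre : ∀ s ∈ Icc (0:ℝ) 1, ‖z s - 1‖ < 1 := by
        intro s hs
        have hmem1 : ((s, ((j:ℝ)+1)/N)) ∈ K := by
          refine ⟨hs, ?_, ?_⟩ <;> simp only []
          · positivity
          · rw [div_le_one hNpos]
            have : (j:ℝ) + 1 ≤ (N:ℝ) := by exact_mod_cast (by omega : j + 1 ≤ N)
            linarith
        have hmem2 : ((s, (j:ℝ)/N)) ∈ K := by
          refine ⟨hs, ?_, ?_⟩ <;> simp only []
          · positivity
          · rw [div_le_one hNpos]
            have : (j:ℝ) ≤ (N:ℝ) := by exact_mod_cast (by omega : j ≤ N)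
            linarith
        have hd : dist ((s, ((j:ℝ)+1)/N)) ((s, (j:ℝ)/N)) < η := by
          rw [Prod.dist_eq]
          simp only [dist_self]
          rw [max_lt_iff]
          refine ⟨hη, ?_⟩
          rw [Real.dist_eq]
          have : ((j:ℝ)+1)/N - (j:ℝ)/N = 1/N := by field_simp; ring
          rw [this, abs_of_pos (by positivity)]
          exact hstep
        have := hη1 _ hmem1 _ hmem2 hd
        have habs : z s - 1 = (F (s, ((j:ℝ)+1)/N) - F (s, (j:ℝ)/N)) / F (s, (j:ℝ)/N) := by
          rw [hz]
          rw [eq_div_iff (hF0 _), sub_mul, div_mul_cancel₀ _ (hF0 _), one_mul]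
        rw [habs, norm_div, hnorm, div_one, ← dist_eq_norm]
        exact this
      have hzslit : ∀ s ∈ Icc (0:ℝ) 1, z s ∈ Complex.slitPlane := by
        intro s hs
        rw [Complex.mem_slitPlane_iff]
        left
        have h1 := hzre s hs
        have h2 : -‖z s - 1‖ ≤ (z s - 1).re := by
          have ha := Complex.abs_re_le_norm (z s - 1)
          have hb := neg_abs_le ((z s - 1).re)
          rw [abs_le] at ha
          linarith [ha.1]
        have : (z s).re = 1 + (z s - 1).re := by simp
        linarith
      refine ⟨fun s => θ s + Complex.log (z s), ?_, ?_, ?_⟩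
      · refine hθc.add ?_
        intro s hs
        have : ContinuousAt (fun s => Complex.log (z s)) s := by
          refine (continuousAt_clog (hzslit s hs)).comp ?_
          exact ((hF.comp (by fun_prop)).div (hF.comp (by fun_prop)) (fun x => hF0 _)).continuousAt
        exact this.continuousWithinAt
      · intro s hs
        rw [Complex.exp_add, Complex.exp_log (hz0 s), hθe s hs, hz]
        simp only []
        rw [mul_comm, div_mul_cancel₀ _ (hF0 _)]
        norm_num
      · have hz10 : z 1 = z 0 := by rw [hz]; simp only []; rw [hper, hper]
        calc θ 1 + Complex.log (z 1) - (θ 0 + Complex.log (z 0))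
            = (θ 1 - θ 0) + (Complex.log (z 1) - Complex.log (z 0)) := by ring
          _ = -(4*π)*I := by rw [hz10, hθd]; ring
  obtain ⟨θ, hθc, hθe, hθd⟩ := main N le_rfl
  have hconst : ∀ s ∈ Icc (0:ℝ) 1, Complex.exp (θ s) = Complex.exp (θ 0) := by
    intro s hs
    rw [hθe s hs, hθe 0 ⟨le_refl 0, zero_le_one⟩]
    have : (N:ℝ)/N = 1 := div_self (ne_of_gt hNpos)
    rw [this, htop s]
  have := exp_const_endpoints hθc hconst
  rw [sub_eq_zero.mpr this] at hθd
  have hπ := Real.pi_pos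
  have : (-(4*π)*I).im = 0 := by rw [← hθd]; simp
  simp [Complex.mul_im] at this


variable {n : ℕ}

/-- Hermitian-style pairing on `Fin n → ℂ`. -/
noncomputable def ip (v w : Fin n → ℂ) : ℂ :=
  ∑ i, (starRingEnd ℂ) (v i) * w i

lemma continuous_ip : Continuous (fun p : (Fin n → ℂ) × (Fin n → ℂ) => ip p.1 p.2) := by
  unfold ip
  exact continuous_finset_sum _ fun i _ =>
    ((Complex.continuous_conj.comp ((continuous_apply i).comp continuous_fst)).mul
      ((continuous_apply i).comp continuous_snd))

lemma ip_smul_right (v w : Fin n → ℂ) (c : ℂ) : ip v (c • w) = c * ip v w := by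
  unfold ip
  rw [Finset.mul_sum]
  congr 1; ext i
  simp [Pi.smul_apply, smul_eq_mul]; ring

lemma ip_smul_left (v w : Fin n → ℂ) (c : ℂ) :
    ip (c • v) w = (starRingEnd ℂ) c * ip v w := by
  unfold ip
  rw [Finset.mul_sum]
  congr 1; ext i
  simp [Pi.smul_apply, smul_eq_mul, map_mul]; ring

lemma ip_real_smul (v w : Fin n → ℂ) (t : ℝ) : ip v (t • w) = (t:ℂ) * ip v w := by
  have : (t:ℂ) • w = t • w := by
    ext i; simp [Pi.smul_apply, Complex.real_smul]
  rw [← this, ip_smul_right]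

lemma ip_self_ne_zero {v : Fin n → ℂ} (hv : v ≠ 0) : ip v v ≠ 0 := by
  have h : ip v v = ((∑ i, Complex.normSq (v i) : ℝ) : ℂ) := by
    unfold ip
    push_cast
    congr 1; ext i
    rw [Complex.normSq_eq_conj_mul_self]
  rw [h]
  intro h0
  apply hv
  have : (∑ i, Complex.normSq (v i) : ℝ) = 0 := by exact_mod_cast h0
  have hz := (Finset.sum_eq_zero_iff_of_nonneg
    (fun i _ => Complex.normSq_nonneg (v i))).mp this
  ext i
  exact Complex.normSq_eq_zero.mp (hz i (Finset.mem_univ i))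

/-- The square-phase of a real line relative to a vector `v`. -/
noncomputable def psi (v : Fin n → ℂ) : Projectivization ℝ (Fin n → ℂ) → ℂ :=
  Projectivization.lift
    (fun w => ip v w.1 / (starRingEnd ℂ) (ip v w.1))
    (by
      rintro ⟨a, ha⟩ ⟨b, hb⟩ t hab
      simp only at hab ⊢
      subst hab
      have ht : t ≠ 0 := by
        rintro rfl; simp at ha
      rw [ip_real_smul, map_mul, Complex.conj_ofReal]
      rw [mul_div_mul_left _ _ (by exact_mod_cast ht)])

lemma psi_mk (v : Fin n → ℂ) (w : Fin n → ℂ) (hw : w ≠ 0) :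
    psi v (Projectivization.mk ℝ w hw) = ip v w / (starRingEnd ℂ) (ip v w) := rfl


lemma psi_mk' {n : ℕ} (v : Fin n → ℂ) (w : {u : Fin n → ℂ // u ≠ 0}) :
    psi v (Projectivization.mk' ℝ w) = ip v w.1 / (starRingEnd ℂ) (ip v w.1) := rfl

variable {n : ℕ}

/-- scaling homeomorphism-map on nonzero vectors -/
noncomputable def scl (t : ℝˣ) (w : {v : Fin n → ℂ // v ≠ 0}) : {v : Fin n → ℂ // v ≠ 0} :=
  ⟨(t:ℝ) • w.1, smul_ne_zero (by exact_mod_cast t.ne_zero) w.2⟩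

lemma scl_continuous (t : ℝˣ) : Continuous (scl (n := n) t) :=
  by unfold scl; exact Continuous.subtype_mk (f := fun w : {v : Fin n → ℂ // v ≠ 0} => (t:ℝ) • w.1) ((continuous_const_smul (t:ℝ)).comp continuous_subtype_val) _

lemma scl_inv (t : ℝˣ) (w : {v : Fin n → ℂ // v ≠ 0}) : scl t⁻¹ (scl t w) = w := by
  apply Subtype.ext
  simp only [scl, smul_smul]
  rw [← Units.val_mul, inv_mul_cancel, Units.val_one, one_smul]

lemma continuous_mk'_real :
    Continuous (fun w : {v : Fin n → ℂ // v ≠ 0} => Projectivization.mk' ℝ w) :=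
  continuous_quot_mk

lemma continuous_mk'_complex :
    Continuous (fun w : {v : Fin n → ℂ // v ≠ 0} => Projectivization.mk' ℂ w) :=
  continuous_quot_mk

lemma isOpenQuotientMap_mk' :
    IsOpenQuotientMap (fun w : {v : Fin n → ℂ // v ≠ 0} => Projectivization.mk' ℝ w) := by
  refine ⟨fun x => Quotient.inductionOn' x fun w => ⟨w, rfl⟩, continuous_mk'_real, ?_⟩
  intro U hU
  have key : (fun w : {v : Fin n → ℂ // v ≠ 0} => Projectivization.mk' ℝ w) ⁻¹'
      ((fun w => Projectivization.mk' ℝ w) '' U) = ⋃ t : ℝˣ, scl t '' U := by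
    ext x
    simp only [Set.mem_preimage, Set.mem_image, Set.mem_iUnion]
    constructor
    · rintro ⟨u, hu, hux⟩
      have hrel : (projectivizationSetoid ℝ (Fin n → ℂ)).r u x := Quotient.exact' hux
      obtain ⟨t, ht⟩ : ∃ t : ℝˣ, t • x.1 = u.1 := hrel
      refine ⟨t⁻¹, u, hu, ?_⟩
      apply Subtype.ext
      show ((t⁻¹ : ℝˣ) : ℝ) • u.1 = x.1
      rw [← ht]
      show ((t⁻¹ : ℝˣ) : ℝ) • ((t : ℝˣ) • x.1) = x.1
      rw [Units.smul_def, smul_smul, ← Units.val_mul, inv_mul_cancel, Units.val_one, one_smul]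
    · rintro ⟨t, u, hu, hux⟩
      refine ⟨u, hu, ?_⟩
      apply Quotient.sound'
      show ∃ g : ℝˣ, g • x.1 = u.1
      refine ⟨t⁻¹, ?_⟩
      have : x.1 = (t:ℝ) • u.1 := by rw [← hux]; rfl
      rw [this, Units.smul_def, smul_smul, ← Units.val_mul, inv_mul_cancel, Units.val_one,
        one_smul]
  have hqm : IsQuotientMap (fun w : {v : Fin n → ℂ // v ≠ 0} => Projectivization.mk' ℝ w) :=
    isQuotientMap_quotient_mk'
  rw [← hqm.isOpen_preimage, key]
  refine isOpen_iUnion fun t => ?_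
  have himg : scl t '' U = scl t⁻¹ ⁻¹' U := by
    ext x
    constructor
    · rintro ⟨u, hu, rfl⟩
      rwa [Set.mem_preimage, scl_inv]
    · intro hx
      refine ⟨scl t⁻¹ x, hx, ?_⟩
      have := scl_inv t⁻¹ x
      rwa [inv_inv] at this
  rw [himg]
  exact (scl_continuous t⁻¹).isOpen_preimage U hU


lemma psi_contAt (v₀ : Fin n → ℂ) (w₀ : {v : Fin n → ℂ // v ≠ 0}) (h : ip v₀ w₀.1 ≠ 0) :
    ContinuousAt (fun p : (Fin n → ℂ) × Projectivization ℝ (Fin n → ℂ) => psi p.1 p.2)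
      (v₀, Projectivization.mk' ℝ w₀) := by
  have hoq : IsOpenQuotientMap
      (Prod.map (id : (Fin n → ℂ) → _)
        (fun w : {v : Fin n → ℂ // v ≠ 0} => Projectivization.mk' ℝ w)) :=
    IsOpenQuotientMap.id.prodMap isOpenQuotientMap_mk'
  have key := hoq.continuousAt_comp_iff
    (g := fun p : (Fin n → ℂ) × Projectivization ℝ (Fin n → ℂ) => psi p.1 p.2)
    (x := (v₀, w₀))
  apply key.mp
  have heq : ((fun p : (Fin n → ℂ) × Projectivization ℝ (Fin n → ℂ) => psi p.1 p.2) ∘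
      (Prod.map (id : (Fin n → ℂ) → _)
        (fun w : {v : Fin n → ℂ // v ≠ 0} => Projectivization.mk' ℝ w))) =
      fun q : (Fin n → ℂ) × {v : Fin n → ℂ // v ≠ 0} =>
        ip q.1 q.2.1 / (starRingEnd ℂ) (ip q.1 q.2.1) := by
    ext q
    exact psi_mk' q.1 q.2
  rw [heq]
  have hipc : Continuous (fun q : (Fin n → ℂ) × {v : Fin n → ℂ // v ≠ 0} => ip q.1 q.2.1) :=
    continuous_ip.comp (continuous_fst.prodMk (continuous_subtype_val.comp continuous_snd))
  apply ContinuousAt.div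
  · exact hipc.continuousAt
  · exact (Complex.continuous_conj.comp hipc).continuousAt
  · rw [starRingEnd_apply]
    exact star_ne_zero.mpr h


/-- From the section property: a representative of `s (mk ℂ v)` pairing nontrivially with `v`. -/
lemma sec_rep
    (pr : Projectivization ℝ (Fin n → ℂ) → Projectivization ℂ (Fin n → ℂ))
    (hpr : ∀ (v : Fin n → ℂ) (hv : v ≠ 0),
      pr (Projectivization.mk ℝ v hv) = Projectivization.mk ℂ v hv)
    (s : Projectivization ℂ (Fin n → ℂ) → Projectivization ℝ (Fin n → ℂ))
    (hsec : ∀ x, pr (s x) = x)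
    (v : Fin n → ℂ) (hv : v ≠ 0) :
    ∃ w : {u : Fin n → ℂ // u ≠ 0},
      Projectivization.mk' ℝ w = s (Projectivization.mk ℂ v hv) ∧ ip v w.1 ≠ 0 := by
  set x := s (Projectivization.mk ℂ v hv) with hx
  refine ⟨⟨x.rep, x.rep_nonzero⟩, ?_, ?_⟩
  · rw [Projectivization.mk'_eq_mk]
    exact x.mk_rep
  · have h1 : pr x = Projectivization.mk ℂ v hv := hsec _
    have h2 : pr x = Projectivization.mk ℂ x.rep x.rep_nonzero := by
      conv_lhs => rw [← x.mk_rep]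
      exact hpr x.rep x.rep_nonzero
    have h3 : Projectivization.mk ℂ x.rep x.rep_nonzero = Projectivization.mk ℂ v hv := by
      rw [← h2, h1]
    rw [Projectivization.mk_eq_mk_iff] at h3
    obtain ⟨c, hc⟩ := h3
    show ip v x.rep ≠ 0
    rw [← hc, Units.smul_def, ip_smul_right]
    exact mul_ne_zero c.ne_zero (ip_self_ne_zero hv)


end NoSection

open NoSection Complex Set Real Topology in
/-- The natural map `π : ℝP^{2n-1} → ℂP^{n-1}`, sending the real line through a nonzero
vector `v ∈ ℂⁿ` to the complex line through `v`, admits no continuous section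
when `n ≥ 2`. -/

theorem stmt_0 (n : ℕ) (hn : 2 ≤ n)
    (pr : Projectivization ℝ (Fin n → ℂ) → Projectivization ℂ (Fin n → ℂ))
    (hpr : ∀ (v : Fin n → ℂ) (hv : v ≠ 0),
      pr (Projectivization.mk ℝ v hv) = Projectivization.mk ℂ v hv)
    (s : Projectivization ℂ (Fin n → ℂ) → Projectivization ℝ (Fin n → ℂ))
    (hs : Continuous s) :
    ¬ ∀ x, pr (s x) = x := by
  intro hsec
  -- basis vectors
  set i0 : Fin n := ⟨0, by omega⟩ with hi0
  set i1 : Fin n := ⟨1, by omega⟩ with hi1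
  have hi01 : i1 ≠ i0 := by
    simp [hi0, hi1, Fin.ext_iff]
  set E0 : Fin n → ℂ := fun j => if j = i0 then 1 else 0 with hE0def
  set E1 : Fin n → ℂ := fun j => if j = i1 then 1 else 0 with hE1def
  have hE0 : E0 ≠ 0 := by
    intro h
    have := congrFun h i0
    simp [hE0def] at this
  have hE1 : E1 ≠ 0 := by
    intro h
    have := congrFun h i1
    simp [hE1def] at this
  have hE0i1 : E0 i1 = 0 := by simp [hE0def, hi01]
  have hE1i1 : E1 i1 = 1 := by simp [hE1def]
  have hE0i0 : E0 i0 = 1 := by simp [hE0def]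
  have hE1i0 : E1 i0 = 0 := by simp [hE1def, hi01.symm]
  -- the homotopy of vectors
  set H : ℝ × ℝ → (Fin n → ℂ) := fun p =>
    (1 - p.2) • (Complex.exp (2 * (π:ℝ) * p.1 * Complex.I) • E0) + p.2 • E1 with hHdef
  have hH : ∀ p, H p ≠ 0 := by
    intro p hp
    by_cases h2 : p.2 = 0
    · have := congrFun hp i0
      simp [hHdef, hE0i0, hE1i0, h2] at this
    · have := congrFun hp i1
      simp [hHdef, hE0i1, hE1i1] at this
      exact h2 this
  have hHcont : Continuous H := by
    apply Continuous.add
    · apply Continuous.fun_smul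
      · exact (continuous_const.sub continuous_snd)
      · apply Continuous.fun_smul
        · exact Complex.continuous_exp.comp (by fun_prop)
        · exact continuous_const
    · exact continuous_snd.smul continuous_const
  -- the main map
  set K : {v : Fin n → ℂ // v ≠ 0} → ℂ :=
    fun v => psi v.1 (s (Projectivization.mk' ℂ v)) with hKdef
  have hmk'c : ∀ (v : Fin n → ℂ) (hv : v ≠ 0),
      Projectivization.mk' ℂ (⟨v, hv⟩ : {u : Fin n → ℂ // u ≠ 0}) =
        Projectivization.mk ℂ v hv := fun _ _ => rfl
  have hKcont : ∀ v : {u : Fin n → ℂ // u ≠ 0}, ContinuousAt K v := by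
    intro v
    obtain ⟨w, hw, hip⟩ := sec_rep pr hpr s hsec v.1 v.2
    have : K = (fun p : (Fin n → ℂ) × Projectivization ℝ (Fin n → ℂ) => psi p.1 p.2) ∘
        (fun u : {v : Fin n → ℂ // v ≠ 0} => (u.1, s (Projectivization.mk' ℂ u))) := rfl
    rw [this]
    apply ContinuousAt.comp
    · have hpt : s (Projectivization.mk' ℂ v) = Projectivization.mk' ℝ w := hw.symm
      rw [hpt]
      exact psi_contAt v.1 w hip
    · exact (continuous_subtype_val.prodMk (hs.comp continuous_mk'_complex)).continuousAt
  set F : ℝ × ℝ → ℂ := fun p => K ⟨H p, hH p⟩ with hFdef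
  have hFcont : Continuous F := by
    rw [continuous_iff_continuousAt]
    intro p
    exact (hKcont _).comp ((hHcont.subtype_mk hH).continuousAt)
  -- value computation
  have hKval : ∀ (v : Fin n → ℂ) (hv : v ≠ 0) (w : {u : Fin n → ℂ // u ≠ 0})
      (hw : Projectivization.mk' ℝ w = s (Projectivization.mk ℂ v hv)),
      K ⟨v, hv⟩ = ip v w.1 / (starRingEnd ℂ) (ip v w.1) := by
    intro v hv w hw
    rw [hKdef]
    simp only
    rw [hmk'c v hv, ← hw, psi_mk']
  have hnorm : ∀ p, ‖F p‖ = 1 := by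
    intro p
    obtain ⟨w, hw, hip⟩ := sec_rep pr hpr s hsec (H p) (hH p)
    rw [hFdef]
    simp only
    rw [hKval (H p) (hH p) w hw]
    rw [norm_div, Complex.norm_conj, div_self (by simpa using hip)]
  -- periodicity
  have hHper : ∀ t : ℝ, H (1, t) = H (0, t) := by
    intro t
    rw [hHdef]
    simp only
    congr 2
    have h1 : 2 * (π:ℝ) * (1:ℝ) * Complex.I = 2 * π * Complex.I := by push_cast; ring
    have h0 : 2 * (π:ℝ) * (0:ℝ) * Complex.I = 0 := by push_cast; ring
    rw [h1, h0, Complex.exp_two_pi_mul_I, Complex.exp_zero]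
  have hper : ∀ t : ℝ, F (1, t) = F (0, t) := by
    intro t
    rw [hFdef]
    simp only
    congr 1
    exact Subtype.ext (hHper t)
  have hHtop : ∀ s' : ℝ, H (s', 1) = H (0, 1) := by
    intro s'
    rw [hHdef]
    simp only [sub_self, zero_smul, zero_add]
  have htop : ∀ s' : ℝ, F (s', 1) = F (0, 1) := by
    intro s'
    rw [hFdef]
    simp only
    congr 1
    exact Subtype.ext (hHtop s')
  -- bottom value
  obtain ⟨w0, hw0, hip0⟩ := sec_rep pr hpr s hsec E0 hE0
  set a : ℂ := ip E0 w0.1 with hadef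
  have hKz : ∀ (z : ℂ) (hz : z ≠ 0),
      K ⟨z • E0, smul_ne_zero hz hE0⟩ =
        ((starRingEnd ℂ) z * a) / (z * (starRingEnd ℂ) a) := by
    intro z hz
    have hmk : Projectivization.mk ℂ (z • E0) (smul_ne_zero hz hE0) =
        Projectivization.mk ℂ E0 hE0 := by
      rw [Projectivization.mk_eq_mk_iff]
      exact ⟨Units.mk0 z hz, by simp [Units.smul_def]⟩
    have hw' : Projectivization.mk' ℝ w0 =
        s (Projectivization.mk ℂ (z • E0) (smul_ne_zero hz hE0)) := by
      rw [hmk]; exact hw0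
    rw [hKval (z • E0) (smul_ne_zero hz hE0) w0 hw']
    rw [ip_smul_left, ← hadef, map_mul, Complex.conj_conj]
  have hHbot : ∀ s' : ℝ, H (s', 0) =
      Complex.exp (2 * (π:ℝ) * s' * Complex.I) • E0 := by
    intro s'
    rw [hHdef]
    simp only [sub_zero, one_smul, zero_smul, add_zero]
  have hbot : ∀ s' : ℝ, F (s', 0) =
      Complex.exp (-(4 * (π:ℝ) * s') * Complex.I) * F (0, 0) := by
    intro s'
    set e : ℂ := Complex.exp (2 * (π:ℝ) * s' * Complex.I) with hedef
    have he : e ≠ 0 := Complex.exp_ne_zero _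
    have hFs : F (s', 0) = ((starRingEnd ℂ) e * a) / (e * (starRingEnd ℂ) a) := by
      rw [hFdef]
      simp only
      have : (⟨H (s', 0), hH _⟩ : {u : Fin n → ℂ // u ≠ 0}) =
          ⟨e • E0, smul_ne_zero he hE0⟩ := Subtype.ext (hHbot s')
      rw [this, hKz e he]
    have hF0 : F (0, 0) = a / (starRingEnd ℂ) a := by
      rw [hFdef]
      simp only
      have h1 : Complex.exp (2 * (π:ℝ) * (0:ℝ) * Complex.I) = 1 := by
        have : 2 * (π:ℝ) * (0:ℝ) * Complex.I = 0 := by push_cast; ring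
        rw [this, Complex.exp_zero]
      have hv1 : H (0, 0) = (1:ℂ) • E0 := by rw [hHbot 0, h1]
      have : (⟨H (0, 0), hH _⟩ : {u : Fin n → ℂ // u ≠ 0}) =
          ⟨(1:ℂ) • E0, smul_ne_zero one_ne_zero hE0⟩ := Subtype.ext hv1
      rw [this, hKz 1 one_ne_zero]
      simp
    rw [hFs, hF0]
    have ha : a ≠ 0 := hip0
    have hca : (starRingEnd ℂ) a ≠ 0 := by
      rw [starRingEnd_apply]; exact star_ne_zero.mpr ha
    have hconje : (starRingEnd ℂ) e = Complex.exp (-(2 * (π:ℝ) * s') * Complex.I) := by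
      rw [hedef, ← Complex.exp_conj]
      congr 1
      simp only [map_mul, Complex.conj_ofReal, Complex.conj_I, map_ofNat]
      ring
    have hkey : Complex.exp (-(4 * (π:ℝ) * s') * Complex.I) * e = (starRingEnd ℂ) e := by
      rw [hconje, hedef, ← Complex.exp_add]
      congr 1
      push_cast
      ring
    rw [← mul_div_assoc, div_eq_div_iff (mul_ne_zero he hca) hca]
    linear_combination (-(a * (starRingEnd ℂ) a)) * hkey
  exact no_winding F hFcont hnorm hper htop hbot
end

section
/- For n ≥ 2, the Hopf map h : S^{2n-1} → ℂP^{n-1}, sending a unit vector u ∈ ℂ^n to the complex one-dimensional subspace containing u, admits no continuous section. -/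
open Projectivization

noncomputable instance (n : ℕ) :
    TopologicalSpace (Projectivization ℂ (EuclideanSpace ℂ (Fin n))) :=
  inferInstanceAs
    (TopologicalSpace (Quotient (projectivizationSetoid ℂ (EuclideanSpace ℂ (Fin n)))))


open Complex Set

private lemma telescope_prod (B : ℕ → ℂ) (hB : ∀ k, B k ≠ 0) (N : ℕ) :
    ∏ k ∈ Finset.range N, (B (k + 1) / B k) = B N / B 0 := by
  induction N with
  | zero => simp [div_self (hB 0)]
  | succ n ih =>
      rw [Finset.prod_range_succ, ih, div_mul_div_comm]
      rw [div_eq_div_iff (by exact mul_ne_zero (hB 0) (hB n)) (hB 0)]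
      ring

private lemma re_pos_of_close {z w : ℂ} (hz : ‖z‖ = 1) (hw : ‖w‖ = 1)
    (hzw : ‖z - w‖ < 1) : 0 < (z / w).re := by
  have hw0 : w ≠ 0 := by intro h; rw [h] at hw; simp at hw
  have hr : ‖z / w - 1‖ < 1 := by
    rw [show z / w - 1 = (z - w) / w by field_simp]
    rw [norm_div, hw, div_one]; exact hzw
  set r := z / w with hrdef
  have hr1 : ‖r‖ = 1 := by rw [hrdef, norm_div, hz, hw]; norm_num
  have h1 : (r.re - 1) ^ 2 + r.im ^ 2 < 1 := by
    have := hr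
    rw [show ‖r - 1‖ = Real.sqrt ((r.re - 1) ^ 2 + r.im ^ 2) by
      rw [Complex.norm_def, Complex.normSq_apply]
      norm_num [Complex.sub_re, Complex.sub_im]; ring_nf] at this
    nlinarith [Real.sq_sqrt (by positivity : (0:ℝ) ≤ (r.re - 1) ^ 2 + r.im ^ 2),
      Real.sqrt_nonneg ((r.re - 1) ^ 2 + r.im ^ 2)]
  have h2 : Complex.normSq r = 1 := by
    have : ‖r‖ = 1 := by exact hr1
    rw [← Complex.sq_norm, this]; norm_num
  rw [Complex.normSq_apply] at h2
  nlinarith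

/-- Existence of a continuous logarithm on `[0, L]` for a continuous unit-circle-valued map. -/

private lemma exists_lift (F : ℝ → ℂ) (hF : Continuous F) (h1 : ∀ t, ‖F t‖ = 1)
    (L : ℝ) (hL : 0 < L) :
    ∃ g : ℝ → ℂ, Continuous g ∧ ∀ t ∈ Icc 0 L, Complex.exp (g t) = F t := by
  have hFne : ∀ t, F t ≠ 0 := fun t h => by have := h1 t; rw [h] at this; simp at this
  -- uniform continuity on [0, L]
  obtain ⟨δ, hδ0, hδ⟩ := (Metric.uniformContinuousOn_iff.1
    ((isCompact_Icc (a := (0:ℝ)) (b := L)).uniformContinuousOn_of_continuous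
      hF.continuousOn)) 1 one_pos
  set N : ℕ := ⌈L / δ⌉₊ + 1 with hN
  have hN0 : (0:ℝ) < N := by positivity
  set d : ℝ := L / N with hd
  have hd0 : 0 < d := by positivity
  have hdδ : d < δ := by
    rw [hd, div_lt_iff₀ hN0]
    calc L = δ * (L / δ) := by field_simp
    _ ≤ δ * ⌈L / δ⌉₊ := by
        exact mul_le_mul_of_nonneg_left (Nat.le_ceil _) hδ0.le
    _ < δ * N := by
        apply mul_lt_mul_of_pos_left _ hδ0
        rw [hN]; push_cast; linarith
  -- the clamped grid points
  set c : ℕ → ℝ → ℝ := fun k t => min (max t 0) (k * d) with hc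
  have hcmem : ∀ k : ℕ, k ≤ N → ∀ t, c k t ∈ Icc 0 L := by
    intro k hk t
    constructor
    · exact le_min (le_max_right _ _) (by positivity)
    · refine min_le_of_right_le ?_
      calc (k:ℝ) * d ≤ N * d := mul_le_mul_of_nonneg_right (by exact_mod_cast hk) hd0.le
      _ = L := by rw [hd]; field_simp
  have hcdist : ∀ k : ℕ, ∀ t, c k t ≤ c (k+1) t ∧ c (k+1) t ≤ c k t + d := by
    intro k t
    have hkk : (k:ℝ) * d ≤ (k+1 : ℕ) * d := by push_cast; nlinarith
    constructor
    · exact min_le_min le_rfl hkk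
    · rcases le_total (max t 0) (k * d) with hle | hle
      · rw [hc]; simp only
        rw [min_eq_left hle, min_eq_left (le_trans hle hkk)]; linarith
      · rw [hc]; simp only
        rw [min_eq_right hle]
        refine le_trans (min_le_right _ _) ?_
        push_cast; linarith
  set B : ℕ → ℝ → ℂ := fun k t => F (c k t) with hB
  have hBne : ∀ k t, B k t ≠ 0 := fun k t => hFne _
  have hBnorm : ∀ k t, ‖B k t‖ = 1 := fun k t => h1 _
  have hclose : ∀ k : ℕ, k < N → ∀ t, ‖B (k+1) t - B k t‖ < 1 := by
    intro k hk t
    have h₁ := hcmem k (le_of_lt hk) t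
    have h₂ := hcmem (k+1) (by omega) t
    have h₃ := hcdist k t
    have : dist (c (k+1) t) (c k t) < δ := by
      rw [Real.dist_eq, abs_lt]; constructor <;> linarith
    simpa [dist_eq_norm] using hδ _ h₂ _ h₁ this
  set g : ℝ → ℂ := fun t =>
    Complex.log (F 0) + ∑ k ∈ Finset.range N, Complex.log (B (k+1) t / B k t) with hg
  have hBcont : ∀ k, Continuous (B k) := by
    intro k
    exact hF.comp (((continuous_id.max continuous_const)).min continuous_const)
  refine ⟨g, ?_, ?_⟩
  · apply continuous_const.add
    apply continuous_finset_sum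
    intro k hk
    rw [continuous_iff_continuousAt]
    intro t
    apply ContinuousAt.clog
    · exact ((hBcont (k+1)).div (hBcont k) (fun x => hBne k x)).continuousAt
    · rw [Complex.mem_slitPlane_iff]
      left
      exact re_pos_of_close (hBnorm _ _) (hBnorm _ _)
        (hclose k (Finset.mem_range.1 hk) t)
  · intro t ht
    rw [hg]
    simp only
    rw [Complex.exp_add, Complex.exp_sum, Complex.exp_log (hFne 0)]
    have : ∀ k ∈ Finset.range N, Complex.exp (Complex.log (B (k+1) t / B k t))
        = B (k+1) t / B k t := by
      intro k _
      exact Complex.exp_log (div_ne_zero (hBne _ _) (hBne _ _))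
    rw [Finset.prod_congr rfl this, telescope_prod _ (fun k => hBne k t)]
    have hB0 : B 0 t = F 0 := by
      rw [hB]; simp only [hc]
      norm_num
    have hBN : B N t = F t := by
      rw [hB]; simp only [hc]
      rw [max_eq_left ht.1, show (N:ℝ) * d = L by rw [hd]; field_simp,
        min_eq_left ht.2]
    rw [hB0, hBN, mul_div_cancel₀ _ (hFne 0)]

private lemma inc_unique {L : ℝ} (hL : 0 ≤ L) (g₁ g₂ : ℝ → ℂ)
    (h₁ : ContinuousOn g₁ (Icc 0 L)) (h₂ : ContinuousOn g₂ (Icc 0 L))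
    (hexp : ∀ t ∈ Icc 0 L, Complex.exp (g₁ t) = Complex.exp (g₂ t)) :
    g₁ L - g₁ 0 = g₂ L - g₂ 0 := by
  have key : ∀ t ∈ Icc 0 L, ∃ m : ℤ, g₁ t - g₂ t = (m : ℂ) * (2 * Real.pi * I) := by
    intro t ht
    have : Complex.exp (g₁ t - g₂ t) = 1 := by
      rw [Complex.exp_sub, hexp t ht, div_self (Complex.exp_ne_zero _)]
    exact Complex.exp_eq_one_iff.1 this
  set φ : ℝ → ℝ := fun t => (g₁ t - g₂ t).im with hφ
  have hφcont : ContinuousOn φ (Icc 0 L) :=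
    Complex.continuous_im.comp_continuousOn (h₁.sub h₂)
  have h0m : 0 ∈ Icc (0:ℝ) L := ⟨le_refl _, hL⟩
  have hLm : L ∈ Icc (0:ℝ) L := ⟨hL, le_refl _⟩
  obtain ⟨m₀, hm₀⟩ := key 0 h0m
  obtain ⟨m₁, hm₁⟩ := key L hLm
  have hφ0 : φ 0 = 2 * Real.pi * m₀ := by
    rw [hφ]; simp only; rw [hm₀]; simp [Complex.mul_im]; ring
  have hφL : φ L = 2 * Real.pi * m₁ := by
    rw [hφ]; simp only; rw [hm₁]; simp [Complex.mul_im]; ring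
  have hm : m₀ = m₁ := by
    by_contra hne
    have hπ := Real.pi_pos
    -- find an intermediate value that is an odd multiple of π, contradiction
    have parity : ∀ t ∈ Icc 0 L, φ t ≠ 2 * Real.pi * m₀ + Real.pi := by
      intro t ht heq
      obtain ⟨m, hm⟩ := key t ht
      have : φ t = 2 * Real.pi * m := by
        rw [hφ]; simp only; rw [hm]; simp [Complex.mul_im]; ring
      rw [this] at heq
      have : (2 * (m : ℝ) - 2 * (m₀ : ℝ) - 1) * Real.pi = 0 := by linarith
      have h2 : (2 * (m:ℝ) - 2 * m₀ - 1) = 0 := by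
        rcases mul_eq_zero.1 this with h | h
        · exact h
        · exact absurd h (ne_of_gt hπ)
      have : (2 * m - 2 * m₀ - 1 : ℤ) = 0 := by exact_mod_cast h2
      omega
    have parity' : ∀ t ∈ Icc 0 L, φ t ≠ 2 * Real.pi * m₀ - Real.pi := by
      intro t ht heq
      obtain ⟨m, hm⟩ := key t ht
      have : φ t = 2 * Real.pi * m := by
        rw [hφ]; simp only; rw [hm]; simp [Complex.mul_im]; ring
      rw [this] at heq
      have : (2 * (m : ℝ) - 2 * (m₀ : ℝ) + 1) * Real.pi = 0 := by linarith
      have h2 : (2 * (m:ℝ) - 2 * m₀ + 1) = 0 := by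
        rcases mul_eq_zero.1 this with h | h
        · exact h
        · exact absurd h (ne_of_gt hπ)
      have : (2 * m - 2 * m₀ + 1 : ℤ) = 0 := by exact_mod_cast h2
      omega
    rcases lt_or_gt_of_ne hne with hlt | hgt
    · -- m₀ < m₁ : use value 2π m₀ + π ∈ [φ 0, φ L]
      have hmem : (2 * Real.pi * m₀ + Real.pi) ∈ Icc (φ 0) (φ L) := by
        rw [hφ0, hφL]
        constructor
        · linarith
        · have : (m₀ : ℝ) + 1 ≤ m₁ := by exact_mod_cast hlt
          nlinarith
      obtain ⟨t, ht, hφt⟩ := intermediate_value_Icc hL hφcont hmem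
      exact parity t ht hφt
    · have hmem : (2 * Real.pi * m₀ - Real.pi) ∈ Icc (φ L) (φ 0) := by
        rw [hφ0, hφL]
        constructor
        · have : (m₁ : ℝ) + 1 ≤ m₀ := by exact_mod_cast hgt
          nlinarith
        · linarith
      obtain ⟨t, ht, hφt⟩ := intermediate_value_Icc' hL hφcont hmem
      exact parity' t ht hφt
  have : g₁ L - g₂ L = g₁ 0 - g₂ 0 := by rw [hm₀, hm₁, hm]
  linear_combination this

private lemma winding_const (f : ℝ → ℝ → ℂ)
    (hf : Continuous fun p : ℝ × ℝ => f p.1 p.2)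
    (h1 : ∀ t θ, ‖f t θ‖ = 1)
    (hloop : ∀ t, f t (2 * Real.pi) = f t 0)
    (g : ℝ → ℝ → ℂ) (hgc : ∀ t, Continuous (g t))
    (hg : ∀ t, ∀ θ ∈ Icc 0 (2 * Real.pi), Complex.exp (g t θ) = f t θ)
    (t t' : ℝ) :
    g t (2 * Real.pi) - g t 0 = g t' (2 * Real.pi) - g t' 0 := by
  have hπ := Real.pi_pos
  have hL : (0:ℝ) ≤ 2 * Real.pi := by linarith
  have hfne : ∀ a θ, f a θ ≠ 0 := by
    intro a θ hz; have := h1 a θ; rw [hz] at this; simp at this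
  set D : ℝ → ℂ := fun a => g a (2 * Real.pi) - g a 0 with hD
  have hloc : ∀ a : ℝ, ∃ ε > 0, ∀ b : ℝ, |b - a| < ε → D b = D a := by
    intro a
    have hK : IsCompact ((Icc (a-1) (a+1)) ×ˢ (Icc (0:ℝ) (2*Real.pi))) :=
      isCompact_Icc.prod isCompact_Icc
    obtain ⟨δ₀, hδ₀, hδ⟩ := (Metric.uniformContinuousOn_iff.1
      (hK.uniformContinuousOn_of_continuous hf.continuousOn)) 1 one_pos
    refine ⟨min δ₀ 1, by positivity, ?_⟩
    intro b hb
    have hb1 : |b - a| < 1 := lt_of_lt_of_le hb (min_le_right _ _)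
    have hbδ : |b - a| < δ₀ := lt_of_lt_of_le hb (min_le_left _ _)
    have hclose : ∀ θ ∈ Icc (0:ℝ) (2*Real.pi), ‖f b θ - f a θ‖ < 1 := by
      intro θ hθ
      have hmb : (b, θ) ∈ (Icc (a-1) (a+1)) ×ˢ (Icc (0:ℝ) (2*Real.pi)) := by
        refine ⟨?_, hθ⟩
        rw [abs_lt] at hb1
        exact ⟨by linarith [hb1.1], by linarith [hb1.2]⟩
      have hma : (a, θ) ∈ (Icc (a-1) (a+1)) ×ˢ (Icc (0:ℝ) (2*Real.pi)) := by
        refine ⟨⟨by linarith, by linarith⟩, hθ⟩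
      have hdist : dist ((b, θ) : ℝ × ℝ) (a, θ) < δ₀ := by
        rw [Prod.dist_eq]
        simp only [dist_self]
        rw [Real.dist_eq]
        have : max (|b - a|) 0 = |b - a| := max_eq_left (abs_nonneg _)
        rw [this]; exact hbδ
      simpa [dist_eq_norm] using hδ _ hmb _ hma hdist
    set G : ℝ → ℂ := fun θ => g a θ + Complex.log (f b θ / f a θ) with hG
    have hfb : Continuous fun θ => f b θ :=
      hf.comp (continuous_const.prodMk continuous_id)
    have hfa : Continuous fun θ => f a θ :=
      hf.comp (continuous_const.prodMk continuous_id)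
    have hGcont : ContinuousOn G (Icc 0 (2*Real.pi)) := by
      refine (hgc a).continuousOn.add ?_
      intro θ hθ
      refine ContinuousAt.continuousWithinAt ?_
      refine ContinuousAt.clog ?_ ?_
      · exact ((hfb.div hfa (fun x => hfne a x))).continuousAt
      · rw [Complex.mem_slitPlane_iff]
        exact Or.inl (re_pos_of_close (h1 b θ) (h1 a θ) (hclose θ hθ))
    have hGexp : ∀ θ ∈ Icc (0:ℝ) (2*Real.pi), Complex.exp (G θ) = f b θ := by
      intro θ hθ
      rw [hG]
      simp only
      rw [Complex.exp_add, hg a θ hθ,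
        Complex.exp_log (div_ne_zero (hfne b θ) (hfne a θ)),
        mul_comm, div_mul_cancel₀ _ (hfne a θ)]
    have := inc_unique hL (g b) G (hgc b).continuousOn hGcont
      (fun θ hθ => by rw [hg b θ hθ, hGexp θ hθ])
    rw [hD]
    simp only
    rw [this, hG]
    simp only
    rw [hloop b, hloop a]
    ring
  -- clopen argument
  have : {x : ℝ | D x = D t} = univ := by
    refine IsClopen.eq_univ ?_ ⟨t, rfl⟩
    constructor
    · rw [← isOpen_compl_iff]
      rw [Metric.isOpen_iff]
      intro x hx
      obtain ⟨ε, hε, hloc'⟩ := hloc x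
      refine ⟨ε, hε, ?_⟩
      intro y hy
      rw [Metric.mem_ball, Real.dist_eq] at hy
      intro hyS
      exact hx ((hloc' y hy).symm.trans hyS)
    · rw [Metric.isOpen_iff]
      intro x hx
      obtain ⟨ε, hε, hloc'⟩ := hloc x
      refine ⟨ε, hε, ?_⟩
      intro y hy
      rw [Metric.mem_ball, Real.dist_eq] at hy
      rw [mem_setOf_eq, hloc' y hy]
      exact hx
  have : t' ∈ {x : ℝ | D x = D t} := this ▸ mem_univ t'
  exact this.symm

set_option maxHeartbeats 1000000 in
/-- The Hopf map `h : S^{2n-1} → ℂP^{n-1}`, sending a unit vector `u ∈ ℂⁿ` to the complex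
line through `u`, admits no continuous section when `n ≥ 2`. -/
theorem stmt_1 (n : ℕ) (hn : 2 ≤ n)
    (h : Metric.sphere (0 : EuclideanSpace ℂ (Fin n)) 1 →
      Projectivization ℂ (EuclideanSpace ℂ (Fin n)))
    (hh : ∀ (u : Metric.sphere (0 : EuclideanSpace ℂ (Fin n)) 1)
      (hu : (u : EuclideanSpace ℂ (Fin n)) ≠ 0),
      h u = Projectivization.mk ℂ (u : EuclideanSpace ℂ (Fin n)) hu)
    (s : Projectivization ℂ (EuclideanSpace ℂ (Fin n)) →
      Metric.sphere (0 : EuclideanSpace ℂ (Fin n)) 1)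
    (hs : Continuous s) :
    ¬ ∀ x, h (s x) = x := by
  intro hsec
  classical
  have hπ := Real.pi_pos
  have h0n : 0 < n := by omega
  have h1n : 1 < n := by omega
  set i0 : Fin n := ⟨0, h0n⟩ with hi0
  set i1 : Fin n := ⟨1, h1n⟩ with hi1
  have hi : i0 ≠ i1 := by simp [hi0, hi1, Fin.ext_iff]
  set u₀ : EuclideanSpace ℂ (Fin n) := EuclideanSpace.single i0 1 with hu₀
  set u₁ : EuclideanSpace ℂ (Fin n) := EuclideanSpace.single i1 1 with hu₁
  have h00 : (inner ℂ u₀ u₀ : ℂ) = 1 := by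
    simp [hu₀, EuclideanSpace.inner_single_left, EuclideanSpace.single_apply]
  have h01 : (inner ℂ u₀ u₁ : ℂ) = 0 := by
    simp [hu₀, hu₁, EuclideanSpace.inner_single_left, EuclideanSpace.single_apply, Ne.symm hi]
  have hn0 : ‖u₀‖ = 1 := by simp [hu₀, EuclideanSpace.norm_single]
  have hn1 : ‖u₁‖ = 1 := by simp [hu₁, EuclideanSpace.norm_single]
  -- the 2-parameter family of unit vectors
  set v : ℝ → ℝ → EuclideanSpace ℂ (Fin n) := fun t θ =>
    (Complex.exp (θ * I) * (Real.cos t : ℂ)) • u₀ + ((Real.sin t : ℂ)) • u₁ with hv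
  have hvnorm : ∀ t θ, ‖v t θ‖ = 1 := by
    intro t θ
    have hcross : (inner ℂ ((Complex.exp (θ * I) * (Real.cos t : ℂ)) • u₀)
        (((Real.sin t : ℂ)) • u₁) : ℂ) = 0 := by
      rw [inner_smul_left, inner_smul_right, h01]; ring
    have hsq : ‖v t θ‖ ^ 2 = 1 := by
      rw [hv]
      simp only
      rw [norm_add_sq (𝕜 := ℂ), hcross]
      rw [norm_smul, norm_smul, hn0, hn1]
      simp only [map_zero, mul_one]
      rw [norm_mul]
      have he : ‖Complex.exp ((θ:ℂ) * I)‖ = 1 := by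
        exact Complex.norm_exp_ofReal_mul_I θ
      rw [he, one_mul, Complex.norm_real, Complex.norm_real]
      rw [Real.norm_eq_abs, Real.norm_eq_abs]
      rw [_root_.sq_abs, _root_.sq_abs]
      linarith [Real.cos_sq_add_sin_sq t]
    nlinarith [norm_nonneg (v t θ)]
  have hvne : ∀ t θ, v t θ ≠ 0 := by
    intro t θ hz
    have := hvnorm t θ
    rw [hz] at this
    simp at this
  have hvcont : Continuous fun p : ℝ × ℝ => v p.1 p.2 := by
    apply Continuous.add
    · apply Continuous.fun_smul _ continuous_const
      exact (Complex.continuous_exp.comp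
        ((Complex.continuous_ofReal.comp continuous_snd).mul continuous_const)).mul
        (Complex.continuous_ofReal.comp (Real.continuous_cos.comp continuous_fst))
    · exact Continuous.fun_smul
        (Complex.continuous_ofReal.comp (Real.continuous_sin.comp continuous_fst))
        continuous_const
  have hvhalf : ∀ θ, v (Real.pi / 2) θ = u₁ := by
    intro θ
    rw [hv]
    simp [Real.cos_pi_div_two, Real.sin_pi_div_two]
  have hv0 : ∀ θ : ℝ, v 0 θ = Complex.exp ((θ:ℂ) * I) • u₀ := by
    intro θ
    rw [hv]
    simp [Real.cos_zero, Real.sin_zero]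
  have hv2π : ∀ t, v t (2 * Real.pi) = v t 0 := by
    intro t
    have h2π : Complex.exp (((2 * Real.pi : ℝ) : ℂ) * I) = 1 := by
      push_cast
      exact Complex.exp_two_pi_mul_I
    have hz : Complex.exp (((0 : ℝ) : ℂ) * I) = 1 := by simp
    simp only [hv]
    rw [h2π, hz]
  clear_value v u₀ u₁
  clear hv hu₀ hu₁
  -- continuity of the composite with the Hopf section
  have hmkcont : Continuous fun p : ℝ × ℝ =>
      Projectivization.mk ℂ (v p.1 p.2) (hvne p.1 p.2) := by
    have hsub : Continuous fun p : ℝ × ℝ =>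
        (⟨v p.1 p.2, hvne p.1 p.2⟩ : {w : EuclideanSpace ℂ (Fin n) // w ≠ 0}) :=
      hvcont.subtype_mk _
    exact continuous_quotient_mk'.comp hsub
  set f : ℝ → ℝ → ℂ := fun t θ =>
    (inner ℂ (v t θ) ((s (Projectivization.mk ℂ (v t θ) (hvne t θ)) :
      EuclideanSpace ℂ (Fin n))) : ℂ) with hf
  have hfcont : Continuous fun p : ℝ × ℝ => f p.1 p.2 :=
    Continuous.inner hvcont (continuous_subtype_val.comp (hs.comp hmkcont))
  -- the key unit-scalar property
  have hkey : ∀ t θ, ∃ a : ℂˣ,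
      (a : ℂ) • v t θ = ((s (Projectivization.mk ℂ (v t θ) (hvne t θ)) :
        EuclideanSpace ℂ (Fin n))) := by
    intro t θ
    set x := Projectivization.mk ℂ (v t θ) (hvne t θ) with hx
    have hne : (s x : EuclideanSpace ℂ (Fin n)) ≠ 0 := ne_zero_of_mem_unit_sphere (s x)
    have h1 := hh (s x) hne
    rw [hsec x] at h1
    exact (Projectivization.mk_eq_mk_iff ℂ _ _ hne (hvne t θ)).1 h1.symm
  have hfval : ∀ t θ, ‖f t θ‖ = 1 := by
    intro t θ
    obtain ⟨a, ha⟩ := hkey t θ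
    have hfeq : f t θ = (a : ℂ) := by
      simp only [hf]
      rw [← ha, inner_smul_right, inner_self_eq_norm_sq_to_K, hvnorm t θ]
      norm_num
    have hnorm : ‖(s (Projectivization.mk ℂ (v t θ) (hvne t θ)) :
        EuclideanSpace ℂ (Fin n))‖ = 1 := norm_eq_of_mem_sphere _
    rw [← ha, norm_smul, hvnorm t θ, mul_one] at hnorm
    rw [hfeq]; exact hnorm
  have hfne : ∀ t θ, f t θ ≠ 0 := by
    intro t θ hz; have := hfval t θ; rw [hz] at this; simp at this
  -- congruence
  have hfcongr : ∀ t θ t' θ', v t θ = v t' θ' → f t θ = f t' θ' := by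
    intro t θ t' θ' hveq
    have hmk : Projectivization.mk ℂ (v t θ) (hvne t θ)
        = Projectivization.mk ℂ (v t' θ') (hvne t' θ') :=
      (Projectivization.mk_eq_mk_iff ℂ _ _ _ _).2 ⟨1, by rw [one_smul]; exact hveq.symm⟩
    simp only [hf]
    rw [hmk, hveq]
  have hloop : ∀ t, f t (2 * Real.pi) = f t 0 := by
    intro t
    exact hfcongr _ _ _ _ (hv2π t)
  have hf0 : ∀ θ : ℝ, f 0 θ = Complex.exp (-((θ:ℂ) * I)) * f 0 0 := by
    intro θ
    have hmk : Projectivization.mk ℂ (v 0 θ) (hvne 0 θ)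
        = Projectivization.mk ℂ (v 0 0) (hvne 0 0) := by
      refine (Projectivization.mk_eq_mk_iff ℂ _ _ _ _).2
        ⟨Units.mk0 (Complex.exp ((θ:ℂ) * I)) (Complex.exp_ne_zero _), ?_⟩
      rw [hv0 θ, hv0 0]
      simp only [Units.smul_mk0]
      rw [smul_smul]
      congr 1
      rw [← Complex.exp_add]
      congr 1
      push_cast
      ring
    simp only [hf]
    rw [hmk, hv0 θ, inner_smul_left]
    have hconj : (starRingEnd ℂ) (Complex.exp ((θ:ℂ) * I)) = Complex.exp (-((θ:ℂ) * I)) := by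
      rw [← Complex.exp_conj]
      congr 1
      simp [Complex.conj_I]
    rw [hconj]
    have hv00 : v 0 0 = u₀ := by
      rw [hv0 0]
      simp
    congr 1
    rw [← hv00]
  clear_value f
  clear hf
  -- choose lifts
  have hfc1 : ∀ t, Continuous (f t) := by
    intro t
    have hpair : Continuous fun θ : ℝ => ((t, θ) : ℝ × ℝ) :=
      continuous_const.prodMk continuous_id
    show Continuous fun θ : ℝ => f t θ
    exact hfcont.comp hpair
  choose g hgc hge using fun t =>
    exists_lift (f t) (hfc1 t) (hfval t) (2 * Real.pi) (by positivity)
  have hwind := winding_const f hfcont hfval hloop g hgc hge 0 (Real.pi / 2)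
  have hL : (0:ℝ) ≤ 2 * Real.pi := by linarith
  have hDhalf : g (Real.pi / 2) (2 * Real.pi) - g (Real.pi / 2) 0 = 0 := by
    have hconst : ∀ θ ∈ Icc (0:ℝ) (2 * Real.pi),
        f (Real.pi / 2) θ = f (Real.pi / 2) 0 := by
      intro θ _
      exact hfcongr _ _ _ _ (by rw [hvhalf, hvhalf])
    have := inc_unique hL (g (Real.pi / 2)) (fun _ => Complex.log (f (Real.pi / 2) 0))
      (hgc _).continuousOn continuous_const.continuousOn
      (fun θ hθ => by
        rw [hge _ θ hθ, Complex.exp_log (hfne _ 0), hconst θ hθ])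
    rw [this]; ring
  have hD0 : g 0 (2 * Real.pi) - g 0 0 = -(((2 * Real.pi : ℝ) : ℂ) * I) := by
    set G : ℝ → ℂ := fun θ => -((θ:ℂ) * I) + Complex.log (f 0 0) with hG
    have hGcont : Continuous G := by
      apply Continuous.add _ continuous_const
      exact (Continuous.mul (Complex.continuous_ofReal) continuous_const).neg
    have := inc_unique hL (g 0) G (hgc 0).continuousOn hGcont.continuousOn
      (fun θ hθ => by
        rw [hge 0 θ hθ, hG]
        simp only
        rw [Complex.exp_add, Complex.exp_log (hfne 0 0), hf0 θ])
    rw [this, hG]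
    simp
  rw [hD0, hDhalf] at hwind
  have him := congrArg Complex.im hwind
  simp [Complex.mul_im] at him
end

section
/- A rigid domain of ℂP¹ is dense in ℂP¹: if U ⊆ ℂP¹ is a nonempty connected open set such that every holomorphic embedding f : U → ℂP¹ is the restriction of a Möbius transformation, then the closure of U is all of ℂP¹. -/
open Set OnePoint

/-- The coordinate chart of the Riemann sphere `ℂP¹ = ℂ ∪ {∞}` adapted to a point `x`:
the identity chart near finite points, and `z ↦ 1/z` near `∞` (with junk values
elsewhere). -/
noncomputable def sphereChart (x y : OnePoint ℂ) : ℂ :=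
  OnePoint.elim x (OnePoint.elim y 0 fun z => z⁻¹) (fun _ => OnePoint.elim y 0 fun z => z)

/-- The inverse of the coordinate chart adapted to `x`. -/
noncomputable def sphereChartInv (x : OnePoint ℂ) (z : ℂ) : OnePoint ℂ :=
  OnePoint.elim x (if z = 0 then (∞ : OnePoint ℂ) else ((z⁻¹ : ℂ) : OnePoint ℂ))
    (fun _ => ((z : ℂ) : OnePoint ℂ))

/-- A map of the Riemann sphere is holomorphic on an open set `U` if it is continuous on
`U` and is analytic at each point of `U` when read in the adapted charts. -/
def SphereHolomorphicOn (f : OnePoint ℂ → OnePoint ℂ) (U : Set (OnePoint ℂ)) : Prop :=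
  ContinuousOn f U ∧ ∀ x ∈ U,
    AnalyticAt ℂ (fun z : ℂ => sphereChart (f x) (f (sphereChartInv x z))) (sphereChart x x)

/-- A Möbius transformation of the Riemann sphere: `z ↦ (αz+β)/(γz+δ)` with
`αδ - βγ ≠ 0`, extended to `∞` in the usual way. -/
def IsMobius (M : OnePoint ℂ → OnePoint ℂ) : Prop :=
  ∃ α β γ δ : ℂ, α * δ - β * γ ≠ 0 ∧
    (∀ z : ℂ, M ((z : ℂ) : OnePoint ℂ) =
      if γ * z + δ = 0 then (∞ : OnePoint ℂ)
      else (((α * z + β) / (γ * z + δ) : ℂ) : OnePoint ℂ)) ∧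
    M (∞ : OnePoint ℂ) = (if γ = 0 then (∞ : OnePoint ℂ) else ((α / γ : ℂ) : OnePoint ℂ))

/-- The quadratic function `w ↦ w + c w²` used to produce a non-Möbius embedding. -/
noncomputable def hfun (c w : ℂ) : ℂ := w + c * w ^ 2

lemma hfun_continuous (c : ℂ) : Continuous (hfun c) := by
  unfold hfun
  exact continuous_id.add (continuous_const.mul (continuous_pow 2))

/-- The candidate non-Möbius embedding: the quadratic `hfun c` read through the
Möbius change of variable `z ↦ 1/(z - p)` (sending `∞` to `0`). -/
noncomputable def auxF (p c : ℂ) (x : OnePoint ℂ) : OnePoint ℂ :=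
  OnePoint.elim x ((hfun c 0 : ℂ) : OnePoint ℂ)
    (fun z => if z = p then (∞ : OnePoint ℂ) else ((hfun c ((z - p)⁻¹) : ℂ) : OnePoint ℂ))

lemma auxF_infty (p c : ℂ) : auxF p c ∞ = ((hfun c 0 : ℂ) : OnePoint ℂ) := rfl

lemma auxF_coe (p c z : ℂ) (hz : z ≠ p) :
    auxF p c (z : OnePoint ℂ) = ((hfun c ((z - p)⁻¹) : ℂ) : OnePoint ℂ) := by
  simp [auxF, hz]

/-- Every nonempty open subset of `ℂP¹` contains a finite point. -/
lemma exists_coe_mem {W : Set (OnePoint ℂ)} (hW : IsOpen W) (hne : W.Nonempty) :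
    ∃ z : ℂ, (z : OnePoint ℂ) ∈ W := by
  obtain ⟨x, hx⟩ := hne
  cases x with
  | coe z => exact ⟨z, hx⟩
  | infty =>
    have h1 : IsCompact (((↑) ⁻¹' W : Set ℂ)ᶜ) :=
      ((OnePoint.isOpen_iff_of_mem' hx).1 hW).1
    by_contra hno
    push_neg at hno
    have hempty : ((↑) ⁻¹' W : Set ℂ) = ∅ := eq_empty_iff_forall_notMem.2 hno
    rw [hempty, compl_empty] at h1
    exact noncompact_univ ℂ h1

/-- The algebraic heart of the contradiction: a quadratic cannot agree with a Möbius map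
on a nonempty open subset of `ℂ`. -/
lemma mobius_contra {α β γ δ p c : ℂ} (hc : c ≠ 0) (hdet : α * δ - β * γ ≠ 0)
    {V : Set ℂ} (hV : IsOpen V) {z₀ : ℂ} (hz₀ : z₀ ∈ V)
    (hkey : ∀ z ∈ V, (α * z + β) * (z - p) ^ 2 = (z - p + c) * (γ * z + δ)) : False := by
  classical
  set P : Polynomial ℂ :=
      (Polynomial.C α * Polynomial.X + Polynomial.C β) * (Polynomial.X - Polynomial.C p) ^ 2 -
        (Polynomial.X - Polynomial.C p + Polynomial.C c) *
          (Polynomial.C γ * Polynomial.X + Polynomial.C δ) with hP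
  have hroot : ∀ z ∈ V, P.IsRoot z := by
    intro z hz
    simp only [hP, Polynomial.IsRoot, Polynomial.eval_sub, Polynomial.eval_mul,
      Polynomial.eval_add, Polynomial.eval_pow, Polynomial.eval_X, Polynomial.eval_C]
    rw [sub_eq_zero]
    exact hkey z hz
  have hPz : P = 0 :=
    P.eq_zero_of_infinite_isRoot
      ((infinite_of_mem_nhds z₀ (hV.mem_nhds hz₀)).mono (fun z hz => hroot z hz))
  have hall : ∀ z : ℂ, (α * z + β) * (z - p) ^ 2 = (z - p + c) * (γ * z + δ) := by
    intro z
    have h := congrArg (Polynomial.eval z) hPz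
    simp only [hP, Polynomial.eval_sub, Polynomial.eval_mul, Polynomial.eval_add,
      Polynomial.eval_pow, Polynomial.eval_X, Polynomial.eval_C, Polynomial.eval_zero] at h
    linear_combination h
  have hδ : γ * p + δ = 0 := by
    have hc0 : c * (γ * p + δ) = 0 := by linear_combination -hall p
    rcases mul_eq_zero.1 hc0 with h | h
    · exact absurd h hc
    · exact h
  have e1 : α * p + α + β = γ + c * γ := by linear_combination hall (p + 1) + (1 + c) * hδ
  have e2 : α * p - α + β = γ - c * γ := by linear_combination hall (p - 1) + (c - 1) * hδ
  have e3 : 4 * (α * p) + 8 * α + 4 * β = 4 * γ + 2 * c * γ := by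
    linear_combination hall (p + 2) + (2 + c) * hδ
  have hγ : γ = 0 := by
    have h6 : c * γ * 6 = 0 := by linear_combination e3 - 6 * e1 + 2 * e2
    rcases mul_eq_zero.1 h6 with h | h
    · rcases mul_eq_zero.1 h with h' | h'
      · exact absurd h' hc
      · exact h'
    · exact absurd h (by norm_num)
  have hα : α = 0 := by
    linear_combination (1 / 2 : ℂ) * e1 - (1 / 2 : ℂ) * e2 + c * hγ
  have hδ0 : δ = 0 := by linear_combination hδ - p * hγ
  exact hdet (by rw [hα, hδ0, hγ]; ring)

/-- A rigid domain of `ℂP¹` — a nonempty connected open set all of whose holomorphic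
embeddings into `ℂP¹` are restrictions of Möbius transformations — is dense in `ℂP¹`. -/
theorem stmt_9 (U : Set (OnePoint ℂ)) (hU : IsOpen U) (hne : U.Nonempty)
    (hconn : IsConnected U)
    (hrigid : ∀ f : OnePoint ℂ → OnePoint ℂ, SphereHolomorphicOn f U → Set.InjOn f U →
      ∃ M : OnePoint ℂ → OnePoint ℂ, IsMobius M ∧ Set.EqOn f M U) :
    closure U = Set.univ := by
  by_contra hcl
  obtain ⟨x₀, hx₀⟩ := (ne_univ_iff_exists_notMem _).mp hcl
  have hWopen : IsOpen (closure U)ᶜ := isClosed_closure.isOpen_compl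
  obtain ⟨p, hp⟩ : ∃ p : ℂ, (p : OnePoint ℂ) ∈ (closure U)ᶜ :=
    exists_coe_mem hWopen ⟨x₀, hx₀⟩
  obtain ⟨r, hr, hball⟩ : ∃ r > 0, Metric.ball p r ⊆ ((↑) ⁻¹' (closure U)ᶜ) :=
    Metric.isOpen_iff.1 (hWopen.preimage OnePoint.continuous_coe) p hp
  -- basic facts about points of U
  have hpU : ∀ z : ℂ, (z : OnePoint ℂ) ∈ U → z ≠ p ∧ r ≤ ‖z - p‖ := by
    intro z hz
    have hzc : (z : OnePoint ℂ) ∈ closure U := subset_closure hz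
    constructor
    · rintro rfl
      exact hball (Metric.mem_ball_self hr) hzc
    · by_contra hlt
      push_neg at hlt
      exact hball (by simpa [Metric.mem_ball, dist_eq_norm] using hlt) hzc
  set c : ℂ := (r : ℂ) / 4 with hcdef
  have hc : c ≠ 0 := by
    simp only [hcdef, div_ne_zero_iff]
    exact ⟨by exact_mod_cast hr.ne', by norm_num⟩
  have hcnorm : ‖c‖ = r / 4 := by
    simp [hcdef, abs_of_pos hr]
  set f : OnePoint ℂ → OnePoint ℂ := auxF p c with hfdef
  -- the "uniformizing" coordinate
  set σ : OnePoint ℂ → ℂ := fun x => OnePoint.elim x 0 (fun z => (z - p)⁻¹) with hσdef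
  have hfσ : ∀ x ∈ U, f x = ((hfun c (σ x) : ℂ) : OnePoint ℂ) := by
    intro x hx
    cases x with
    | infty => rfl
    | coe z =>
      rw [hfdef, auxF_coe p c z (hpU z hx).1]
      simp [hσdef]
  have hσbound : ∀ x ∈ U, ‖σ x‖ ≤ r⁻¹ := by
    intro x hx
    cases x with
    | infty => simp [hσdef]; positivity
    | coe z =>
      have h2 := (hpU z hx).2
      simp only [hσdef, OnePoint.elim_some, norm_inv]
      exact inv_anti₀ hr h2
  -- injectivity of the quadratic on the relevant ball
  have hqinj : ∀ a b : ℂ, ‖a‖ ≤ r⁻¹ → ‖b‖ ≤ r⁻¹ → hfun c a = hfun c b → a = b := by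
    intro a b ha hb hab
    have key : (a - b) * (1 + c * (a + b)) = 0 := by
      simp only [hfun] at hab
      linear_combination hab
    rcases mul_eq_zero.1 key with h | h
    · exact sub_eq_zero.mp h
    · exfalso
      have h1 : c * (a + b) = -1 := by linear_combination h
      have h2 : ‖c * (a + b)‖ = 1 := by rw [h1]; simp
      have h3 : ‖c * (a + b)‖ ≤ (r / 4) * (r⁻¹ + r⁻¹) := by
        rw [norm_mul, hcnorm]
        exact mul_le_mul_of_nonneg_left ((norm_add_le a b).trans (add_le_add ha hb))
          (by positivity)
      have h4 : (r / 4) * (r⁻¹ + r⁻¹) = 1 / 2 := by field_simp; ring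
      rw [h4, h2] at h3
      norm_num at h3
  -- injectivity of f on U
  have hinj : Set.InjOn f U := by
    intro x hx y hy hxy
    rw [hfσ x hx, hfσ y hy] at hxy
    have hσeq : σ x = σ y :=
      hqinj _ _ (hσbound x hx) (hσbound y hy) (OnePoint.coe_eq_coe.mp hxy)
    cases x with
    | infty =>
      cases y with
      | infty => rfl
      | coe w =>
        exfalso
        have hw : w - p ≠ 0 := sub_ne_zero.2 (hpU w hy).1
        simp only [hσdef, OnePoint.elim_infty, OnePoint.elim_some] at hσeq
        exact (inv_ne_zero hw) hσeq.symm
    | coe z =>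
      cases y with
      | infty =>
        exfalso
        have hz : z - p ≠ 0 := sub_ne_zero.2 (hpU z hx).1
        simp only [hσdef, OnePoint.elim_infty, OnePoint.elim_some] at hσeq
        exact (inv_ne_zero hz) hσeq
      | coe w =>
        simp only [hσdef, OnePoint.elim_some] at hσeq
        have : z - p = w - p := inv_injective hσeq
        have : z = w := by linear_combination this
        exact congrArg _ this
  -- continuity of f on U
  have hcont : ContinuousOn f U := by
    intro x hx
    apply ContinuousAt.continuousWithinAt
    cases x with
    | infty =>
      rw [OnePoint.continuousAt_infty', Filter.coclosedCompact_eq_cocompact]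
      have hev : (f ∘ ((↑) : ℂ → OnePoint ℂ)) =ᶠ[Filter.cocompact ℂ]
          (fun z => ((hfun c ((z - p)⁻¹) : ℂ) : OnePoint ℂ)) := by
        filter_upwards [Filter.mem_cocompact.2
          ⟨{p}, isCompact_singleton, subset_rfl⟩] with z hz
        have hz' : z ≠ p := hz
        simp [hfdef, auxF_coe p c z hz']
      apply Filter.Tendsto.congr' hev.symm
      have T1 : Filter.Tendsto (fun z : ℂ => (z - p)⁻¹) (Filter.cocompact ℂ) (nhds 0) := by
        have a1 : Filter.Tendsto (fun z : ℂ => z - p) (Filter.cocompact ℂ)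
            (Filter.cocompact ℂ) := (Homeomorph.subRight p).map_cocompact.le
        have a2 : Filter.Tendsto (Inv.inv : ℂ → ℂ) (Filter.cocompact ℂ) (nhds 0) := by
          rw [← Metric.cobounded_eq_cocompact]
          exact Filter.tendsto_inv₀_cobounded
        exact a2.comp a1
      have hhc : Continuous (hfun c) := hfun_continuous c
      have T2 : Filter.Tendsto (fun z : ℂ => ((hfun c ((z - p)⁻¹) : ℂ) : OnePoint ℂ))
          (Filter.cocompact ℂ) (nhds ((hfun c 0 : ℂ) : OnePoint ℂ)) :=
        (OnePoint.continuous_coe.tendsto _).comp ((hhc.tendsto _).comp T1)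
      exact T2
    | coe z =>
      rw [OnePoint.continuousAt_coe]
      have hz := (hpU z hx).1
      have hg : ContinuousAt (fun w : ℂ => ((hfun c ((w - p)⁻¹) : ℂ) : OnePoint ℂ)) z := by
        have h1 : ContinuousAt (fun w : ℂ => (w - p)⁻¹) z :=
          ((continuous_id.sub continuous_const).continuousAt).inv₀ (sub_ne_zero.2 hz)
        have h2 : Continuous (hfun c) := hfun_continuous c
        exact OnePoint.continuous_coe.continuousAt.comp (h2.continuousAt.comp h1)
      apply hg.congr
      filter_upwards [eventually_ne_nhds hz] with w hw
      simp [hfdef, auxF_coe p c w hw]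
  -- analyticity in charts
  have hanal : ∀ x ∈ U,
      AnalyticAt ℂ (fun z : ℂ => sphereChart (f x) (f (sphereChartInv x z)))
        (sphereChart x x) := by
    intro x hx
    cases x with
    | coe z =>
      have hz := (hpU z hx).1
      have hch : sphereChart (z : OnePoint ℂ) (z : OnePoint ℂ) = z := by
        simp [sphereChart]
      rw [hch]
      have hinvan : AnalyticAt ℂ (fun w : ℂ => (w - p)⁻¹) z :=
        ((analyticAt_id.sub analyticAt_const).inv (sub_ne_zero.2 hz))
      have hG : AnalyticAt ℂ (fun w : ℂ => hfun c ((w - p)⁻¹)) z := by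
        simp only [hfun]
        exact hinvan.add (analyticAt_const.mul (hinvan.pow 2))
      apply hG.congr
      filter_upwards [eventually_ne_nhds hz] with w hw
      have h1 : sphereChartInv (z : OnePoint ℂ) w = (w : OnePoint ℂ) := by
        simp [sphereChartInv]
      rw [h1, hfdef, auxF_coe p c w hw, auxF_coe p c z hz]
      simp [sphereChart]
    | infty =>
      have hch : sphereChart (∞ : OnePoint ℂ) ∞ = 0 := by simp [sphereChart]
      rw [hch]
      have hden : AnalyticAt ℂ (fun w : ℂ => w * (1 - p * w)⁻¹) 0 := by
        apply analyticAt_id.mul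
        apply AnalyticAt.inv
        · exact analyticAt_const.sub (analyticAt_const.mul analyticAt_id)
        · simp
      have hG : AnalyticAt ℂ (fun w : ℂ => hfun c (w * (1 - p * w)⁻¹)) 0 := by
        simp only [hfun]
        exact hden.add (analyticAt_const.mul (hden.pow 2))
      apply hG.congr
      have hballmem : Metric.ball (0 : ℂ) (‖p‖ + 1)⁻¹ ∈ nhds (0 : ℂ) :=
        Metric.ball_mem_nhds _ (by positivity)
      filter_upwards [hballmem] with w hw
      have hwnorm : ‖w‖ < (‖p‖ + 1)⁻¹ := by
        simpa [Metric.mem_ball, dist_eq_norm] using hw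
      by_cases hw0 : w = 0
      · subst hw0
        have h1 : sphereChartInv (∞ : OnePoint ℂ) 0 = ∞ := by simp [sphereChartInv]
        rw [h1]
        simp [hfdef, auxF_infty, sphereChart]
      · have hwp : w⁻¹ ≠ p := by
          intro hcontra
          have hp0 : p ≠ 0 := by
            rintro rfl
            exact hw0 (inv_eq_zero.mp hcontra)
          have hweq : w = p⁻¹ := by rw [← hcontra, inv_inv]
          have h1 : (‖p‖ + 1)⁻¹ ≤ ‖p‖⁻¹ :=
            inv_anti₀ (norm_pos_iff.2 hp0) (by linarith)
          rw [hweq, norm_inv] at hwnorm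
          linarith
        have hden0 : (1 : ℂ) - p * w ≠ 0 := by
          intro h0
          have h1 : p * w = 1 := by linear_combination -h0
          have h2 : ‖p‖ * ‖w‖ = 1 := by
            have := congrArg norm h1
            simpa [norm_mul] using this
          have hp1 : (0:ℝ) < ‖p‖ + 1 := by positivity
          have h3 : ‖p‖ * ‖w‖ < 1 := by
            have hinv : (‖p‖ + 1) * (‖p‖ + 1)⁻¹ = 1 := mul_inv_cancel₀ hp1.ne'
            nlinarith [norm_nonneg p, norm_nonneg w]
          linarith
        have h1 : sphereChartInv (∞ : OnePoint ℂ) w = ((w⁻¹ : ℂ) : OnePoint ℂ) := by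
          simp [sphereChartInv, hw0]
        rw [h1, hfdef, auxF_coe p c _ hwp, auxF_infty]
        have harg : (w⁻¹ - p)⁻¹ = w * (1 - p * w)⁻¹ := by
          have h2 : w⁻¹ - p = (1 - p * w) * w⁻¹ := by field_simp
          rw [h2, mul_inv_rev, inv_inv, mul_comm]
        simp only [sphereChart, OnePoint.elim_some]
        rw [harg]
  -- apply rigidity
  obtain ⟨M, ⟨α, β, γ, δ, hdet, hMc, hMi⟩, hEqOn⟩ := hrigid f ⟨hcont, hanal⟩ hinj
  obtain ⟨z₀, hz₀⟩ : ∃ z : ℂ, (z : OnePoint ℂ) ∈ U := exists_coe_mem hU hne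
  have hVopen : IsOpen ((↑) ⁻¹' U : Set ℂ) := hU.preimage OnePoint.continuous_coe
  have hkey : ∀ z ∈ ((↑) ⁻¹' U : Set ℂ),
      (α * z + β) * (z - p) ^ 2 = (z - p + c) * (γ * z + δ) := by
    intro z hz
    have hzp := hpU z hz
    have h1 := hEqOn hz
    rw [hMc z, hfdef, auxF_coe p c z hzp.1] at h1
    by_cases hγδ : γ * z + δ = 0
    · rw [if_pos hγδ] at h1
      exact absurd h1 (OnePoint.coe_ne_infty _)
    · rw [if_neg hγδ] at h1
      have h2 : hfun c ((z - p)⁻¹) = (α * z + β) / (γ * z + δ) :=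
        OnePoint.coe_eq_coe.mp h1
      have hzp0 : z - p ≠ 0 := sub_ne_zero.2 hzp.1
      simp only [hfun] at h2
      field_simp at h2
      have h4 : (α * z + β) * (z - p) ^ 2 * (z - p) =
          ((z - p + c) * (γ * z + δ)) * (z - p) := by
          rw [eq_div_iff (by intro h; apply hγδ; linear_combination h)] at h2
          linear_combination (-(z - p)) * h2
      exact mul_right_cancel₀ hzp0 h4
  exact mobius_contra hc hdet hVopen hz₀ hkey
end
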